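/- arXiv:1807.02201 — 2 statements merged into one kernel-verified Lean document; each statement's English description precedes it below -/
import Mathlib

section
/- For the Abel kernel ν₀(n) = p·e^{-p}·(p+n)^{n-1}·e^{-n}/n! with p > 0, we have ν₀(n) ≤ (p/√(2π)) · n^{-3/2} for all integers n ≥ 1. -/
open Real

lemma sqrt_pi_le_stirlingSeq (n : ℕ) (hn : 1 ≤ n) : Real.sqrt π ≤ Stirling.stirlingSeq n := by
  obtain ⟨m, rfl⟩ := Nat.exists_eq_add_of_le hn
  have h1 : Filter.Tendsto (Stirling.stirlingSeq ∘ Nat.succ) Filter.atTop (nhds (Real.sqrt π)) :=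
    (Stirling.tendsto_stirlingSeq_sqrt_pi).comp (Filter.tendsto_add_atTop_nat 1)
  have := Stirling.stirlingSeq'_antitone.le_of_tendsto h1 m
  simpa [Nat.succ_eq_add_one, Nat.add_comm] using this

lemma stirling_lb (n : ℕ) (hn : 1 ≤ n) :
    Real.sqrt (2 * π) * Real.sqrt n * ((n : ℝ) ^ n * Real.exp (-(n:ℝ))) ≤ n.factorial := by
  have h := sqrt_pi_le_stirlingSeq n hn
  have hn0 : (0:ℝ) < n := by exact_mod_cast hn
  have hd : (0:ℝ) < Real.sqrt (2 * n) * ((n : ℝ) / Real.exp 1) ^ n := by positivity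
  rw [Stirling.stirlingSeq, le_div_iff₀ hd] at h
  calc Real.sqrt (2 * π) * Real.sqrt n * ((n : ℝ) ^ n * Real.exp (-(n:ℝ)))
      = Real.sqrt π * (Real.sqrt (2 * n) * ((n : ℝ) / Real.exp 1) ^ n) := by
        rw [div_pow, Real.exp_neg, ← Real.exp_nat_mul]
        rw [show Real.sqrt (2*π) * Real.sqrt (n:ℝ) = Real.sqrt π * Real.sqrt (2*n) by
          rw [← Real.sqrt_mul (by positivity), ← Real.sqrt_mul (by positivity)]; ring_nf]
        rw [Real.exp_nat_mul]
        field_simp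
        ring_nf
        rw [← Real.exp_nat_mul, mul_one]
    _ ≤ n.factorial := h

theorem stmt_8 (p : ℝ) (hp : 0 < p) (n : ℕ) (hn : 1 ≤ n) :
    p * Real.exp (-p) * (p + n) ^ (n - 1) * Real.exp (-n) / (n.factorial : ℝ) ≤
      (p / Real.sqrt (2 * Real.pi)) * (n : ℝ) ^ (-(3/2) : ℝ) := by
  have hn0 : (0:ℝ) < n := by exact_mod_cast hn
  set k := n - 1 with hk
  have hnk : n = k + 1 := (Nat.succ_pred_eq_of_pos hn).symm
  -- Step 1: (p+n)^k ≤ n^k * exp p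
  have h1 : p + n ≤ n * Real.exp (p / n) := by
    have := Real.add_one_le_exp (p / n)
    calc p + (n:ℝ) = n * (1 + p / n) := by field_simp; ring
      _ ≤ n * Real.exp (p / n) := by
          apply mul_le_mul_of_nonneg_left _ hn0.le
          linarith [Real.add_one_le_exp (p / n)]
  have h2 : (p + (n:ℝ)) ^ k ≤ (n:ℝ) ^ k * Real.exp p := by
    calc (p + (n:ℝ)) ^ k ≤ ((n:ℝ) * Real.exp (p / n)) ^ k := by
          apply pow_le_pow_left₀ (by positivity) h1
      _ = (n:ℝ) ^ k * Real.exp (p / n * k) := by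
          rw [mul_pow, ← Real.exp_nat_mul]; ring_nf
      _ ≤ (n:ℝ) ^ k * Real.exp p := by
          apply mul_le_mul_of_nonneg_left _ (by positivity)
          apply Real.exp_le_exp.mpr
          rw [div_mul_eq_mul_div, div_le_iff₀ hn0]
          have : (k:ℝ) ≤ n := by exact_mod_cast Nat.sub_le n 1
          nlinarith [hp.le]
  -- Step 2: Stirling
  have hS : Real.sqrt (2 * π) * Real.sqrt n * ((n : ℝ) ^ n * Real.exp (-(n:ℝ))) ≤ n.factorial :=
    stirling_lb n hn
  have hSpos : (0:ℝ) < Real.sqrt (2 * π) * Real.sqrt n * ((n : ℝ) ^ n * Real.exp (-(n:ℝ))) := by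
    positivity
  -- Combine
  have hnum : p * Real.exp (-p) * (p + n) ^ k * Real.exp (-n)
      ≤ p * (n:ℝ) ^ k * Real.exp (-(n:ℝ)) := by
    have := mul_le_mul_of_nonneg_left h2 (by positivity : (0:ℝ) ≤ p * Real.exp (-p))
    calc p * Real.exp (-p) * (p + n) ^ k * Real.exp (-n)
        = p * Real.exp (-p) * ((p + n) ^ k) * Real.exp (-(n:ℝ)) := by norm_num
      _ ≤ p * Real.exp (-p) * ((n:ℝ) ^ k * Real.exp p) * Real.exp (-(n:ℝ)) := by
          apply mul_le_mul_of_nonneg_right _ (Real.exp_pos _).le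
          exact this
      _ = p * (n:ℝ) ^ k * Real.exp (-(n:ℝ)) := by
          rw [Real.exp_neg]; field_simp
  have hmain : p * Real.exp (-p) * (p + n) ^ k * Real.exp (-n) / (n.factorial : ℝ)
      ≤ p * (n:ℝ) ^ k * Real.exp (-(n:ℝ)) /
        (Real.sqrt (2 * π) * Real.sqrt n * ((n : ℝ) ^ n * Real.exp (-(n:ℝ)))) :=
    div_le_div₀ (by positivity) hnum hSpos hS
  refine hmain.trans_eq ?_
  -- Final algebraic identity
  have hrpow : (n : ℝ) ^ (-(3/2) : ℝ) = ((n:ℝ) * Real.sqrt n)⁻¹ := by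
    rw [Real.rpow_neg hn0.le]
    congr 1
    rw [show ((3:ℝ)/2) = 1 + 1/2 by norm_num, Real.rpow_add hn0, Real.rpow_one,
      Real.sqrt_eq_rpow]
  rw [hrpow]
  have hpow : (n:ℝ) ^ n = (n:ℝ) ^ k * n := by
    rw [hnk, pow_succ]
  rw [hpow]
  have h2pi : Real.sqrt (2 * π) ≠ 0 := by positivity
  have hsn : Real.sqrt (n:ℝ) ≠ 0 := by positivity
  have hnk0 : ((n:ℝ))^k ≠ 0 := by positivity
  field_simp
end

section
/- For p > 0 and m > 0, the derivative with respect to m of θ(m) = log(m(p+m)/(p+2m)²) equals 1/V(m), where V(m) = m(1+m/p)(1+2m/p) is the Takacs variance function. -/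
theorem stmt_13 (p m : ℝ) (hp : 0 < p) (hm : 0 < m) :
    HasDerivAt (fun x : ℝ => Real.log (x * (p + x) / (p + 2 * x) ^ 2))
      (1 / (m * (1 + m / p) * (1 + 2 * m / p))) m := by
  have hpm : 0 < p + m := by linarith
  have hp2m : 0 < p + 2 * m := by linarith
  have h1 : HasDerivAt (fun x : ℝ => x * (p + x)) (1 * (p + m) + m * 1) m := by
    simpa using (hasDerivAt_id m).fun_mul ((hasDerivAt_const m p).fun_add (hasDerivAt_id m))
  have h2 : HasDerivAt (fun x : ℝ => p + 2 * x) 2 m := by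
    simpa using (hasDerivAt_const m p).fun_add ((hasDerivAt_id m).const_mul 2)
  have hlog1 : HasDerivAt (fun x : ℝ => Real.log (x * (p + x)))
      ((1 * (p + m) + m * 1) / (m * (p + m))) m :=
    h1.log (by positivity)
  have hlog2 : HasDerivAt (fun x : ℝ => 2 * Real.log (p + 2 * x))
      (2 * (2 / (p + 2 * m))) m :=
    (h2.log (by positivity)).const_mul 2
  have hd : HasDerivAt (fun x : ℝ => Real.log (x * (p + x)) - 2 * Real.log (p + 2 * x))
      ((1 * (p + m) + m * 1) / (m * (p + m)) - 2 * (2 / (p + 2 * m))) m :=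
    hlog1.sub hlog2
  have heq : (fun x : ℝ => Real.log (x * (p + x)) - 2 * Real.log (p + 2 * x)) =ᶠ[nhds m]
      (fun x : ℝ => Real.log (x * (p + x) / (p + 2 * x) ^ 2)) := by
    have hmem : {x : ℝ | 0 < x ∧ 0 < p + 2 * x} ∈ nhds m := by
      have : IsOpen {x : ℝ | 0 < x ∧ 0 < p + 2 * x} := by
        apply IsOpen.inter
        · exact isOpen_lt continuous_const continuous_id
        · exact isOpen_lt continuous_const (continuous_const.add (continuous_const.mul continuous_id))
      exact this.mem_nhds ⟨hm, hp2m⟩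
    filter_upwards [hmem] with x ⟨hx, hx2⟩
    have hxp : 0 < p + x := by linarith
    rw [Real.log_div (by positivity) (by positivity), Real.log_pow]
    push_cast; ring
  have := hd.congr_of_eventuallyEq heq.symm
  refine this.congr_deriv ?_
  field_simp
  ring
end
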